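/- Let X be a topological space and δ an extended semidistance on X. Let f, g, χ : X → ℝ be bounded continuous functions which are δ-Lipschitz on X, with 0 ≤ χ(x) ≤ 1 for all x. Then for every x ∈ X: (i) lip_δ(αf + βg)(x) ≤ |α|·lip_δ f(x) + |β|·lip_δ g(x) for all α, β ∈ ℝ; (ii) lip_δ(f·g)(x) ≤ |f(x)|·lip_δ g(x) + |g(x)|·lip_δ f(x); (iii) lip_δ((1−χ)f + χg)(x) ≤ (1−χ(x))·lip_δ f(x) + χ(x)·lip_δ g(x) + lip_δ χ(x)·|f(x) − g(x)|; (iv) for every continuously differentiable φ : ℝ → ℝ, lip_δ(φ∘f)(x) = |φ'(f(x))|·lip_δ f(x). -/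

import Mathlib

open Filter Set Topology
open scoped ENNReal

/-- The Lipschitz constant of `f` on the set `U` with respect to the extended
semidistance `δ`. -/
noncomputable def eLip {X : Type*} (δ : X → X → ℝ≥0∞) (f : X → ℝ) (U : Set X) : ℝ≥0∞ :=
  sInf {L : ℝ≥0∞ | ∀ y ∈ U, ∀ z ∈ U, ENNReal.ofReal |f y - f z| ≤ L * δ y z}

/-- The asymptotic Lipschitz constant of `f` at the point `x`. -/
noncomputable def asympLip {X : Type*} [TopologicalSpace X] (δ : X → X → ℝ≥0∞)
    (f : X → ℝ) (x : X) : ℝ≥0∞ :=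
  ⨅ U ∈ {U : Set X | IsOpen U ∧ x ∈ U}, eLip δ f U

lemma mem_eLipSet_mono {δ : X → X → ℝ≥0∞} {f : X → ℝ} {U V : Set X} (hUV : U ⊆ V) {L : ℝ≥0∞}
    (hL : ∀ y ∈ V, ∀ z ∈ V, ENNReal.ofReal |f y - f z| ≤ L * δ y z) :
    ∀ y ∈ U, ∀ z ∈ U, ENNReal.ofReal |f y - f z| ≤ L * δ y z :=
  fun y hy z hz => hL y (hUV hy) z (hUV hz)

lemma eLip_mono (δ : X → X → ℝ≥0∞) (f : X → ℝ) {U V : Set X} (hUV : U ⊆ V) :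
    eLip δ f U ≤ eLip δ f V :=
  sInf_le_sInf fun _ hL => mem_eLipSet_mono hUV hL

lemma eLipSet_nonempty {δ : X → X → ℝ≥0∞} {f : X → ℝ} (h : eLip δ f Set.univ ≠ ⊤) (U : Set X) :
    {L : ℝ≥0∞ | ∀ y ∈ U, ∀ z ∈ U, ENNReal.ofReal |f y - f z| ≤ L * δ y z}.Nonempty := by
  have h1 : {L : ℝ≥0∞ | ∀ y ∈ (Set.univ : Set X), ∀ z ∈ Set.univ,
      ENNReal.ofReal |f y - f z| ≤ L * δ y z}.Nonempty := by
    rw [Set.nonempty_iff_ne_empty]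
    intro he
    apply h
    rw [eLip, he, sInf_empty]
  obtain ⟨L, hL⟩ := h1
  exact ⟨L, mem_eLipSet_mono (Set.subset_univ U) hL⟩

lemma asympLip_le_eLip [TopologicalSpace X] (δ : X → X → ℝ≥0∞) (f : X → ℝ) {U : Set X} {x : X}
    (hU : IsOpen U) (hx : x ∈ U) : asympLip δ f x ≤ eLip δ f U := by
  rw [asympLip]
  exact iInf₂_le U ⟨hU, hx⟩

lemma aux_eps {a b S : ℝ≥0∞} (hS : S ≠ ⊤)
    (h : ∀ ε : ℝ, 0 < ε → a ≤ b + ENNReal.ofReal ε * S) : a ≤ b := by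
  refine ENNReal.le_of_forall_pos_le_add fun η hη hb => ?_
  have hS1 : (0:ℝ) < S.toReal + 1 := by positivity
  have hε : (0:ℝ) < (η : ℝ) / (S.toReal + 1) := by positivity
  refine (h _ hε).trans (add_le_add le_rfl ?_)
  calc ENNReal.ofReal ((η : ℝ) / (S.toReal + 1)) * S
      = ENNReal.ofReal ((η : ℝ) / (S.toReal + 1)) * ENNReal.ofReal S.toReal := by
        rw [ENNReal.ofReal_toReal hS]
    _ = ENNReal.ofReal ((η : ℝ) / (S.toReal + 1) * S.toReal) := by
        rw [ENNReal.ofReal_mul hε.le]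
    _ ≤ ENNReal.ofReal (η : ℝ) := by
        apply ENNReal.ofReal_le_ofReal
        rw [div_mul_eq_mul_div, div_le_iff₀ hS1]
        have h1 : (0:ℝ) ≤ (η : ℝ) := η.coe_nonneg
        nlinarith [ENNReal.toReal_nonneg (a := S)]
    _ = (η : ℝ≥0∞) := ENNReal.ofReal_coe_nnreal

lemma aux_le_add3 {ι₁ ι₂ ι₃ : Sort*} (g₁ : ι₁ → ℝ≥0∞) (g₂ : ι₂ → ℝ≥0∞) (g₃ : ι₃ → ℝ≥0∞)
    {a : ℝ≥0∞} (h : ∀ i j k, a ≤ g₁ i + g₂ j + g₃ k) :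
    a ≤ iInf g₁ + iInf g₂ + iInf g₃ := by
  rw [ENNReal.iInf_add, ENNReal.iInf_add]
  refine le_iInf fun i => ?_
  rw [ENNReal.add_iInf]
  refine le_iInf fun k => ?_
  rw [ENNReal.add_iInf, ENNReal.iInf_add]
  exact le_iInf fun j => h i j k


lemma eLip_le_three {X : Type*} (δ : X → X → ℝ≥0∞) (F f₁ f₂ f₃ : X → ℝ) (U : Set X)
    {c₁ c₂ c₃ : ℝ} (hc₁ : 0 ≤ c₁) (hc₂ : 0 ≤ c₂) (hc₃ : 0 ≤ c₃)
    (h₁ : eLip δ f₁ Set.univ ≠ ⊤) (h₂ : eLip δ f₂ Set.univ ≠ ⊤) (h₃ : eLip δ f₃ Set.univ ≠ ⊤)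
    (hbd : ∀ y ∈ U, ∀ z ∈ U,
      |F y - F z| ≤ c₁ * |f₁ y - f₁ z| + c₂ * |f₂ y - f₂ z| + c₃ * |f₃ y - f₃ z|) :
    eLip δ F U ≤ ENNReal.ofReal c₁ * eLip δ f₁ U + ENNReal.ofReal c₂ * eLip δ f₂ U
      + ENNReal.ofReal c₃ * eLip δ f₃ U := by
  set S₁ := {L : ℝ≥0∞ | ∀ y ∈ U, ∀ z ∈ U, ENNReal.ofReal |f₁ y - f₁ z| ≤ L * δ y z} with hS₁
  set S₂ := {L : ℝ≥0∞ | ∀ y ∈ U, ∀ z ∈ U, ENNReal.ofReal |f₂ y - f₂ z| ≤ L * δ y z} with hS₂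
  set S₃ := {L : ℝ≥0∞ | ∀ y ∈ U, ∀ z ∈ U, ENNReal.ofReal |f₃ y - f₃ z| ≤ L * δ y z} with hS₃
  haveI hn₁ : Nonempty S₁ := (eLipSet_nonempty h₁ U).to_subtype
  haveI hn₂ : Nonempty S₂ := (eLipSet_nonempty h₂ U).to_subtype
  haveI hn₃ : Nonempty S₃ := (eLipSet_nonempty h₃ U).to_subtype
  have key : ∀ L₁ ∈ S₁, ∀ L₂ ∈ S₂, ∀ L₃ ∈ S₃,
      eLip δ F U ≤ ENNReal.ofReal c₁ * L₁ + ENNReal.ofReal c₂ * L₂ + ENNReal.ofReal c₃ * L₃ := by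
    intro L₁ hL₁ L₂ hL₂ L₃ hL₃
    apply sInf_le
    intro y hy z hz
    calc ENNReal.ofReal |F y - F z|
        ≤ ENNReal.ofReal (c₁ * |f₁ y - f₁ z| + c₂ * |f₂ y - f₂ z| + c₃ * |f₃ y - f₃ z|) :=
          ENNReal.ofReal_le_ofReal (hbd y hy z hz)
      _ = ENNReal.ofReal c₁ * ENNReal.ofReal |f₁ y - f₁ z|
            + ENNReal.ofReal c₂ * ENNReal.ofReal |f₂ y - f₂ z|
            + ENNReal.ofReal c₃ * ENNReal.ofReal |f₃ y - f₃ z| := by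
          rw [ENNReal.ofReal_add (by positivity) (by positivity),
            ENNReal.ofReal_add (by positivity) (by positivity),
            ENNReal.ofReal_mul hc₁, ENNReal.ofReal_mul hc₂, ENNReal.ofReal_mul hc₃]
      _ ≤ ENNReal.ofReal c₁ * (L₁ * δ y z) + ENNReal.ofReal c₂ * (L₂ * δ y z)
            + ENNReal.ofReal c₃ * (L₃ * δ y z) := by
          gcongr
          exacts [hL₁ y hy z hz, hL₂ y hy z hz, hL₃ y hy z hz]
      _ = (ENNReal.ofReal c₁ * L₁ + ENNReal.ofReal c₂ * L₂ + ENNReal.ofReal c₃ * L₃) * δ y z := by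
          ring
  have e₁ : ENNReal.ofReal c₁ * eLip δ f₁ U = ⨅ L : S₁, ENNReal.ofReal c₁ * (L : ℝ≥0∞) := by
    rw [show eLip δ f₁ U = sInf S₁ from rfl, sInf_eq_iInf']
    exact ENNReal.mul_iInf fun h => absurd h ENNReal.ofReal_ne_top
  have e₂ : ENNReal.ofReal c₂ * eLip δ f₂ U = ⨅ L : S₂, ENNReal.ofReal c₂ * (L : ℝ≥0∞) := by
    rw [show eLip δ f₂ U = sInf S₂ from rfl, sInf_eq_iInf']
    exact ENNReal.mul_iInf fun h => absurd h ENNReal.ofReal_ne_top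
  have e₃ : ENNReal.ofReal c₃ * eLip δ f₃ U = ⨅ L : S₃, ENNReal.ofReal c₃ * (L : ℝ≥0∞) := by
    rw [show eLip δ f₃ U = sInf S₃ from rfl, sInf_eq_iInf']
    exact ENNReal.mul_iInf fun h => absurd h ENNReal.ofReal_ne_top
  rw [e₁, e₂, e₃]
  exact aux_le_add3 _ _ _ fun i j k => key i i.2 j j.2 k k.2

lemma asympLip_le_three {X : Type*} [TopologicalSpace X] (δ : X → X → ℝ≥0∞)
    (F f₁ f₂ f₃ : X → ℝ) (x : X)
    {c₁ c₂ c₃ : ℝ} (hc₁ : 0 ≤ c₁) (hc₂ : 0 ≤ c₂) (hc₃ : 0 ≤ c₃)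
    (h₁ : eLip δ f₁ Set.univ ≠ ⊤) (h₂ : eLip δ f₂ Set.univ ≠ ⊤) (h₃ : eLip δ f₃ Set.univ ≠ ⊤)
    (key : ∀ ε : ℝ, 0 < ε → ∃ V, IsOpen V ∧ x ∈ V ∧ ∀ y ∈ V, ∀ z ∈ V,
      |F y - F z| ≤ (c₁ + ε) * |f₁ y - f₁ z| + (c₂ + ε) * |f₂ y - f₂ z|
        + (c₃ + ε) * |f₃ y - f₃ z|) :
    asympLip δ F x ≤ ENNReal.ofReal c₁ * asympLip δ f₁ x + ENNReal.ofReal c₂ * asympLip δ f₂ x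
      + ENNReal.ofReal c₃ * asympLip δ f₃ x := by
  set N := {U : Set X | IsOpen U ∧ x ∈ U} with hN
  haveI : Nonempty N := ⟨⟨Set.univ, isOpen_univ, Set.mem_univ x⟩⟩
  have ha₁ : asympLip δ f₁ x ≠ ⊤ :=
    ne_top_of_le_ne_top h₁ (asympLip_le_eLip δ f₁ isOpen_univ (Set.mem_univ x))
  have ha₂ : asympLip δ f₂ x ≠ ⊤ :=
    ne_top_of_le_ne_top h₂ (asympLip_le_eLip δ f₂ isOpen_univ (Set.mem_univ x))
  have ha₃ : asympLip δ f₃ x ≠ ⊤ :=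
    ne_top_of_le_ne_top h₃ (asympLip_le_eLip δ f₃ isOpen_univ (Set.mem_univ x))
  have hsub : ∀ h : X → ℝ, asympLip δ h x = ⨅ U : N, eLip δ h U := by
    intro h
    rw [asympLip, iInf_subtype']
  refine aux_eps (S := asympLip δ f₁ x + asympLip δ f₂ x + asympLip δ f₃ x)
    (ENNReal.add_ne_top.2 ⟨ENNReal.add_ne_top.2 ⟨ha₁, ha₂⟩, ha₃⟩) fun ε hε => ?_
  have hrw : ENNReal.ofReal c₁ * asympLip δ f₁ x + ENNReal.ofReal c₂ * asympLip δ f₂ x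
      + ENNReal.ofReal c₃ * asympLip δ f₃ x
      + ENNReal.ofReal ε * (asympLip δ f₁ x + asympLip δ f₂ x + asympLip δ f₃ x)
      = ENNReal.ofReal (c₁ + ε) * asympLip δ f₁ x + ENNReal.ofReal (c₂ + ε) * asympLip δ f₂ x
        + ENNReal.ofReal (c₃ + ε) * asympLip δ f₃ x := by
    rw [ENNReal.ofReal_add hc₁ hε.le, ENNReal.ofReal_add hc₂ hε.le, ENNReal.ofReal_add hc₃ hε.le]
    ring
  rw [hrw]
  obtain ⟨V, hVopen, hxV, hV⟩ := key ε hε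
  have e : ∀ c : ℝ, ∀ h : X → ℝ,
      ENNReal.ofReal c * asympLip δ h x = ⨅ U : N, ENNReal.ofReal c * eLip δ h U := by
    intro c h
    rw [hsub h]
    exact ENNReal.mul_iInf fun h => absurd h ENNReal.ofReal_ne_top
  rw [e (c₁ + ε) f₁, e (c₂ + ε) f₂, e (c₃ + ε) f₃]
  refine aux_le_add3 _ _ _ fun U₁ U₂ U₃ => ?_
  set W := (U₁ : Set X) ∩ U₂ ∩ U₃ ∩ V with hW
  have hWopen : IsOpen W := (((U₁.2.1.inter U₂.2.1).inter U₃.2.1).inter hVopen)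
  have hxW : x ∈ W := ⟨⟨⟨U₁.2.2, U₂.2.2⟩, U₃.2.2⟩, hxV⟩
  have hWV : W ⊆ V := Set.inter_subset_right
  have hW₁ : W ⊆ (U₁ : Set X) :=
    Set.inter_subset_left.trans (Set.inter_subset_left.trans Set.inter_subset_left)
  have hW₂ : W ⊆ (U₂ : Set X) :=
    Set.inter_subset_left.trans (Set.inter_subset_left.trans Set.inter_subset_right)
  have hW₃ : W ⊆ (U₃ : Set X) := Set.inter_subset_left.trans Set.inter_subset_right
  calc asympLip δ F x ≤ eLip δ F W := asympLip_le_eLip δ F hWopen hxW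
    _ ≤ ENNReal.ofReal (c₁ + ε) * eLip δ f₁ W + ENNReal.ofReal (c₂ + ε) * eLip δ f₂ W
        + ENNReal.ofReal (c₃ + ε) * eLip δ f₃ W :=
      eLip_le_three δ F f₁ f₂ f₃ W (by positivity) (by positivity) (by positivity) h₁ h₂ h₃
        fun y hy z hz => hV y (hWV hy) z (hWV hz)
    _ ≤ ENNReal.ofReal (c₁ + ε) * eLip δ f₁ U₁ + ENNReal.ofReal (c₂ + ε) * eLip δ f₂ U₂
        + ENNReal.ofReal (c₃ + ε) * eLip δ f₃ U₃ := by
      gcongr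
      exacts [eLip_mono δ f₁ hW₁, eLip_mono δ f₂ hW₂, eLip_mono δ f₃ hW₃]

theorem stmt0 {X : Type*} [TopologicalSpace X]
    (δ : X → X → ℝ≥0∞)
    (hδ0 : ∀ x, δ x x = 0)
    (hδsymm : ∀ x y, δ x y = δ y x)
    (hδtri : ∀ x y z, δ x z ≤ δ x y + δ y z)
    (f g χ : X → ℝ)
    (hf : Continuous f) (hg : Continuous g) (hχ : Continuous χ)
    (hfb : ∃ C, ∀ x, |f x| ≤ C) (hgb : ∃ C, ∀ x, |g x| ≤ C) (hχb : ∃ C, ∀ x, |χ x| ≤ C)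
    (hfl : eLip δ f Set.univ ≠ ⊤) (hgl : eLip δ g Set.univ ≠ ⊤)
    (hχl : eLip δ χ Set.univ ≠ ⊤)
    (hχ01 : ∀ x, 0 ≤ χ x ∧ χ x ≤ 1)
    (x : X) :
    (∀ α β : ℝ,
      asympLip δ (fun y => α * f y + β * g y) x ≤
        ENNReal.ofReal |α| * asympLip δ f x + ENNReal.ofReal |β| * asympLip δ g x)
    ∧ (asympLip δ (fun y => f y * g y) x ≤
        ENNReal.ofReal |f x| * asympLip δ g x + ENNReal.ofReal |g x| * asympLip δ f x)
    ∧ (asympLip δ (fun y => (1 - χ y) * f y + χ y * g y) x ≤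
        ENNReal.ofReal (1 - χ x) * asympLip δ f x + ENNReal.ofReal (χ x) * asympLip δ g x
          + asympLip δ χ x * ENNReal.ofReal |f x - g x|)
    ∧ (∀ φ : ℝ → ℝ, ContDiff ℝ 1 φ →
        asympLip δ (fun y => φ (f y)) x = ENNReal.ofReal |deriv φ (f x)| * asympLip δ f x) := by
  refine ⟨?_, ?_, ?_, ?_⟩
  · -- part (i)
    intro α β
    have h := asympLip_le_three δ (fun y => α * f y + β * g y) f g f x
      (c₁ := |α|) (c₂ := |β|) (c₃ := 0) (abs_nonneg α) (abs_nonneg β) le_rfl hfl hgl hfl ?_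
    · simpa using h
    · intro ε hε
      refine ⟨Set.univ, isOpen_univ, Set.mem_univ x, fun y _ z _ => ?_⟩
      show |α * f y + β * g y - (α * f z + β * g z)| ≤
        (|α| + ε) * |f y - f z| + (|β| + ε) * |g y - g z| + (0 + ε) * |f y - f z|
      have h0 : α * f y + β * g y - (α * f z + β * g z)
          = α * (f y - f z) + β * (g y - g z) := by ring
      calc |α * f y + β * g y - (α * f z + β * g z)|
          = |α * (f y - f z) + β * (g y - g z)| := by rw [h0]
        _ ≤ |α * (f y - f z)| + |β * (g y - g z)| := abs_add_le _ _
        _ = |α| * |f y - f z| + |β| * |g y - g z| := by rw [abs_mul, abs_mul]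
        _ ≤ (|α| + ε) * |f y - f z| + (|β| + ε) * |g y - g z| + (0 + ε) * |f y - f z| := by
            nlinarith [abs_nonneg (f y - f z), abs_nonneg (g y - g z)]
  · -- part (ii)
    have h := asympLip_le_three δ (fun y => f y * g y) g f g x
      (c₁ := |f x|) (c₂ := |g x|) (c₃ := 0) (abs_nonneg _) (abs_nonneg _) le_rfl hgl hfl hgl ?_
    · simpa using h
    · intro ε hε
      refine ⟨{y | |f y - f x| < ε} ∩ {y | |g y - g x| < ε},
        (isOpen_lt ((hf.sub continuous_const).abs) continuous_const).inter
          (isOpen_lt ((hg.sub continuous_const).abs) continuous_const),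
        ⟨by simpa using hε, by simpa using hε⟩, ?_⟩
      intro y hy z hz
      simp only [Set.mem_inter_iff, Set.mem_setOf_eq] at hy hz
      show |f y * g y - f z * g z| ≤
        (|f x| + ε) * |g y - g z| + (|g x| + ε) * |f y - f z| + (0 + ε) * |g y - g z|
      have b1 : |f y| ≤ |f x| + ε := by
        have := abs_sub_abs_le_abs_sub (f y) (f x); have := hy.1; linarith
      have b2 : |g z| ≤ |g x| + ε := by
        have := abs_sub_abs_le_abs_sub (g z) (g x); have := hz.2; linarith
      have h0 : f y * g y - f z * g z = f y * (g y - g z) + g z * (f y - f z) := by ring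
      calc |f y * g y - f z * g z|
          = |f y * (g y - g z) + g z * (f y - f z)| := by rw [h0]
        _ ≤ |f y * (g y - g z)| + |g z * (f y - f z)| := abs_add_le _ _
        _ = |f y| * |g y - g z| + |g z| * |f y - f z| := by rw [abs_mul, abs_mul]
        _ ≤ (|f x| + ε) * |g y - g z| + (|g x| + ε) * |f y - f z| + (0 + ε) * |g y - g z| := by
            nlinarith [abs_nonneg (g y - g z), abs_nonneg (f y - f z), abs_nonneg (f y),
              abs_nonneg (g z)]
  · -- part (iii)
    have h := asympLip_le_three δ (fun y => (1 - χ y) * f y + χ y * g y) f g χ x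
      (c₁ := 1 - χ x) (c₂ := χ x) (c₃ := |f x - g x|)
      (by linarith [(hχ01 x).2]) (hχ01 x).1 (abs_nonneg _) hfl hgl hχl ?_
    · rw [mul_comm (asympLip δ χ x)]
      exact h
    · intro ε hε
      refine ⟨{y | |χ y - χ x| < ε} ∩ ({y | |f y - f x| < ε / 2} ∩ {y | |g y - g x| < ε / 2}),
        (isOpen_lt ((hχ.sub continuous_const).abs) continuous_const).inter
          ((isOpen_lt ((hf.sub continuous_const).abs) continuous_const).inter
            (isOpen_lt ((hg.sub continuous_const).abs) continuous_const)),
        ⟨by simpa using hε, by simpa using (half_pos hε), by simpa using (half_pos hε)⟩, ?_⟩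
      intro y hy z hz
      simp only [Set.mem_inter_iff, Set.mem_setOf_eq] at hy hz
      show |(1 - χ y) * f y + χ y * g y - ((1 - χ z) * f z + χ z * g z)| ≤
        (1 - χ x + ε) * |f y - f z| + (χ x + ε) * |g y - g z| + (|f x - g x| + ε) * |χ y - χ z|
      have b1 : |1 - χ y| ≤ (1 - χ x) + ε := by
        rw [abs_of_nonneg (by linarith [(hχ01 y).2])]
        have := (abs_lt.1 hy.1).1; linarith
      have b2 : |χ y| ≤ χ x + ε := by
        rw [abs_of_nonneg (hχ01 y).1]
        have := (abs_lt.1 hy.1).2; linarith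
      have b3 : |g z - f z| ≤ |f x - g x| + ε := by
        have e1 : g z - f z = -(f x - g x) + ((g z - g x) + -(f z - f x)) := by ring
        have h1 : |g z - f z| ≤ |-(f x - g x)| + |(g z - g x) + -(f z - f x)| := by
          rw [e1]; exact abs_add_le _ _
        have h2 : |(g z - g x) + -(f z - f x)| ≤ |g z - g x| + |-(f z - f x)| := abs_add_le _ _
        rw [abs_neg] at h1 h2
        have := hz.2.1; have := hz.2.2; linarith
      have h0 : (1 - χ y) * f y + χ y * g y - ((1 - χ z) * f z + χ z * g z)
          = (1 - χ y) * (f y - f z) + χ y * (g y - g z) + (χ y - χ z) * (g z - f z) := by ring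
      calc |(1 - χ y) * f y + χ y * g y - ((1 - χ z) * f z + χ z * g z)|
          = |(1 - χ y) * (f y - f z) + χ y * (g y - g z) + (χ y - χ z) * (g z - f z)| := by
            rw [h0]
        _ ≤ |(1 - χ y) * (f y - f z) + χ y * (g y - g z)| + |(χ y - χ z) * (g z - f z)| :=
            abs_add_le _ _
        _ ≤ |(1 - χ y) * (f y - f z)| + |χ y * (g y - g z)| + |(χ y - χ z) * (g z - f z)| := by
            linarith [abs_add_le ((1 - χ y) * (f y - f z)) (χ y * (g y - g z))]
        _ = |1 - χ y| * |f y - f z| + |χ y| * |g y - g z| + |χ y - χ z| * |g z - f z| := by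
            rw [abs_mul, abs_mul, abs_mul]
        _ ≤ (1 - χ x + ε) * |f y - f z| + (χ x + ε) * |g y - g z|
              + (|f x - g x| + ε) * |χ y - χ z| := by
            nlinarith [abs_nonneg (f y - f z), abs_nonneg (g y - g z), abs_nonneg (χ y - χ z),
              abs_nonneg (g z - f z), abs_nonneg (1 - χ y), abs_nonneg (χ y)]
  · -- part (iv)
    intro φ hφ
    have hd : Differentiable ℝ φ := hφ.differentiable one_ne_zero
    have hdc : Continuous (deriv φ) := hφ.continuous_deriv le_rfl
    set c := |deriv φ (f x)| with hcdef
    -- global Lipschitz bound for φ ∘ f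
    obtain ⟨C, hC⟩ := hfb
    have hfmem : ∀ y : X, f y ∈ Set.Icc (-C) C := fun y =>
      ⟨(abs_le.1 (hC y)).1, (abs_le.1 (hC y)).2⟩
    obtain ⟨M, hM⟩ :=
      (isCompact_Icc (a := -C) (b := C)).exists_bound_of_continuousOn hdc.continuousOn
    have hM0 : 0 ≤ M := le_trans (norm_nonneg _) (hM (f x) (hfmem x))
    have hglobal : ∀ y z : X, |φ (f y) - φ (f z)| ≤ M * |f y - f z| := by
      intro y z
      have := (convex_Icc (-C) C).norm_image_sub_le_of_norm_deriv_le
        (fun t _ => hd.differentiableAt) hM (hfmem z) (hfmem y)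
      simpa [Real.norm_eq_abs] using this
    have hφfl : eLip δ (fun y => φ (f y)) Set.univ ≠ ⊤ := by
      have hle := eLip_le_three δ (fun y => φ (f y)) f f f Set.univ
        (c₁ := M) (c₂ := 0) (c₃ := 0) hM0 le_rfl le_rfl hfl hfl hfl ?_
      · refine ne_top_of_le_ne_top ?_ hle
        simp only [ENNReal.ofReal_zero, zero_mul, add_zero]
        exact ENNReal.mul_ne_top ENNReal.ofReal_ne_top hfl
      · intro y _ z _
        show |φ (f y) - φ (f z)| ≤ M * |f y - f z| + 0 * |f y - f z| + 0 * |f y - f z|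
        nlinarith [hglobal y z]
    have haf : asympLip δ f x ≠ ⊤ :=
      ne_top_of_le_ne_top hfl (asympLip_le_eLip δ f isOpen_univ (Set.mem_univ x))
    have upper : asympLip δ (fun y => φ (f y)) x ≤ ENNReal.ofReal c * asympLip δ f x := by
      have h := asympLip_le_three δ (fun y => φ (f y)) f f f x
        (c₁ := c) (c₂ := 0) (c₃ := 0) (abs_nonneg _) le_rfl le_rfl hfl hfl hfl ?_
      · simpa using h
      · intro ε hε
        have hcont : ContinuousAt (fun t => |deriv φ t|) (f x) := hdc.abs.continuousAt
        have hmem : (fun t => |deriv φ t|) ⁻¹' (Set.Iio (c + ε)) ∈ 𝓝 (f x) :=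
          hcont.preimage_mem_nhds (Iio_mem_nhds (by linarith))
        obtain ⟨r, hr0, hball⟩ := Metric.mem_nhds_iff.1 hmem
        refine ⟨f ⁻¹' Metric.ball (f x) r, Metric.isOpen_ball.preimage hf,
          Set.mem_preimage.2 (Metric.mem_ball_self hr0), ?_⟩
        intro y hy z hz
        have hb : |φ (f y) - φ (f z)| ≤ (c + ε) * |f y - f z| := by
          have := (convex_ball (f x) r).norm_image_sub_le_of_norm_deriv_le
            (fun t _ => hd.differentiableAt) (fun t ht => (hball ht).le) hz hy
          simpa [Real.norm_eq_abs] using this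
        show |φ (f y) - φ (f z)| ≤
          (c + ε) * |f y - f z| + (0 + ε) * |f y - f z| + (0 + ε) * |f y - f z|
        nlinarith [abs_nonneg (f y - f z)]
    have lower : ENNReal.ofReal c * asympLip δ f x ≤ asympLip δ (fun y => φ (f y)) x := by
      by_cases hc0 : c = 0
      · simp [hc0]
      have hcpos : 0 < c := lt_of_le_of_ne (abs_nonneg _) (Ne.symm hc0)
      have step : ∀ ε : ℝ, 0 < ε → ε < c →
          ENNReal.ofReal (c - ε) * asympLip δ f x ≤ asympLip δ (fun y => φ (f y)) x := by
        intro ε hε hεc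
        set a := deriv φ (f x) with ha
        have hcont : ContinuousAt (fun t => |deriv φ t - a|) (f x) :=
          ((hdc.sub continuous_const).abs).continuousAt
        have hmem : (fun t => |deriv φ t - a|) ⁻¹' (Set.Iio ε) ∈ 𝓝 (f x) := by
          refine hcont.preimage_mem_nhds (Iio_mem_nhds ?_)
          simpa [ha] using hε
        obtain ⟨r, hr0, hball⟩ := Metric.mem_nhds_iff.1 hmem
        have hψderiv : ∀ t : ℝ, deriv (fun u => φ u - a * u) t = deriv φ t - a := by
          intro t
          rw [deriv_fun_sub (hd t) (differentiableAt_fun_id.const_mul a),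
            deriv_const_mul a differentiableAt_fun_id, deriv_id'']
          ring
        have hψ : ∀ s ∈ Metric.ball (f x) r, ∀ t ∈ Metric.ball (f x) r,
            |(φ s - a * s) - (φ t - a * t)| ≤ ε * |s - t| := by
          intro s hs t ht
          have := (convex_ball (f x) r).norm_image_sub_le_of_norm_deriv_le
            (f := fun u => φ u - a * u)
            (fun u _ => (hd u).sub (differentiableAt_fun_id.const_mul a))
            (fun u hu => by rw [Real.norm_eq_abs, hψderiv u]; exact (hball hu).le)
            ht hs
          simpa [Real.norm_eq_abs] using this
        have hkey : ∀ y ∈ f ⁻¹' Metric.ball (f x) r, ∀ z ∈ f ⁻¹' Metric.ball (f x) r,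
            |f y - f z| ≤ (c - ε)⁻¹ * |φ (f y) - φ (f z)| := by
          intro y hy z hz
          have h1 := hψ (f y) hy (f z) hz
          have h3 : |a * (f y - f z)| ≤ |φ (f y) - φ (f z)|
              + |(φ (f y) - a * f y) - (φ (f z) - a * f z)| := by
            rw [show a * (f y - f z) = (φ (f y) - φ (f z))
              + -((φ (f y) - a * f y) - (φ (f z) - a * f z)) from by ring]
            exact (abs_add_le _ _).trans (by rw [abs_neg])
          have h2 : c * |f y - f z| ≤ ε * |f y - f z| + |φ (f y) - φ (f z)| := by
            have : c * |f y - f z| = |a * (f y - f z)| := by rw [abs_mul, hcdef, ha]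
            linarith [this ▸ h3]
          have h4 : (c - ε) * |f y - f z| ≤ |φ (f y) - φ (f z)| := by linarith
          rw [inv_mul_eq_div, le_div_iff₀ (by linarith : (0:ℝ) < c - ε)]
          linarith [h4, mul_comm (|f y - f z|) (c - ε)]
        have h := asympLip_le_three δ f (fun y => φ (f y)) f f x
          (c₁ := (c - ε)⁻¹) (c₂ := 0) (c₃ := 0)
          (inv_nonneg.2 (by linarith)) le_rfl le_rfl hφfl hfl hfl ?_
        · replace h : asympLip δ f x ≤
              ENNReal.ofReal (c - ε)⁻¹ * asympLip δ (fun y => φ (f y)) x := by simpa using h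
          calc ENNReal.ofReal (c - ε) * asympLip δ f x
              ≤ ENNReal.ofReal (c - ε)
                  * (ENNReal.ofReal (c - ε)⁻¹ * asympLip δ (fun y => φ (f y)) x) :=
                mul_le_mul_right h _
            _ = ENNReal.ofReal ((c - ε) * (c - ε)⁻¹) * asympLip δ (fun y => φ (f y)) x := by
                rw [ENNReal.ofReal_mul (by linarith), mul_assoc]
            _ = asympLip δ (fun y => φ (f y)) x := by
                rw [mul_inv_cancel₀ (by linarith : c - ε ≠ 0)]
                simp
        · intro ε' hε'
          refine ⟨f ⁻¹' Metric.ball (f x) r, Metric.isOpen_ball.preimage hf,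
            Set.mem_preimage.2 (Metric.mem_ball_self hr0), ?_⟩
          intro y hy z hz
          have := hkey y hy z hz
          show |f y - f z| ≤ ((c - ε)⁻¹ + ε') * |φ (f y) - φ (f z)|
            + (0 + ε') * |f y - f z| + (0 + ε') * |f y - f z|
          nlinarith [abs_nonneg (φ (f y) - φ (f z)), abs_nonneg (f y - f z)]
      refine aux_eps (S := asympLip δ f x) haf fun ε hε => ?_
      by_cases hεc : ε < c
      · have h1 := step ε hε hεc
        have e : ENNReal.ofReal c = ENNReal.ofReal (c - ε) + ENNReal.ofReal ε := by
          rw [← ENNReal.ofReal_add (by linarith) hε.le]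
          ring_nf
        rw [e, add_mul]
        exact add_le_add h1 le_rfl
      · push_neg at hεc
        calc ENNReal.ofReal c * asympLip δ f x
            ≤ ENNReal.ofReal ε * asympLip δ f x :=
              mul_le_mul_left (ENNReal.ofReal_le_ofReal hεc) _
          _ ≤ asympLip δ (fun y => φ (f y)) x + ENNReal.ofReal ε * asympLip δ f x :=
              le_add_self
    exact le_antisymm upper lower
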